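/- Let X be a real Hilbert space and Y a finite-dimensional real Hilbert space, A : X → Y a bounded linear operator, and (X_j)_{j∈ℕ} a sequence of closed subspaces of X with X_j ⊆ X_{j+1} for all j, with (ker A)^⊥ ⊆ closure(∪_{j∈ℕ} X_j), and such that the restriction of A to each X_j is surjective onto Y. Let g ∈ Y, suppose A f = g has a solution of norm at most ρ' in X₀, fix τ > 1, and let (η_l, δ_l) be nonnegative null sequences with (η_l, δ_l) ≠ (0,0) for all l, and j_l → ∞ in ℕ; for each l let B_l : X → Y be bounded linear with ‖B_l − A‖ ≤ η_l and g_l ∈ Y with ‖g_l − g‖ ≤ δ_l. For each l define the RESESOP iterates (f_n^l)_{n∈ℕ} in X_{j_l} by: f_0^l ∈ X_{j_l} with ‖f_0^l‖ ≤ ρ' and f_0^l orthogonal (within X_{j_l}) to ker A ∩ X_{j_l}; and, given f_n^l, set w_n^l := B_l f_n^l − g_l; if ‖w_n^l‖ ≤ τ(ρ' η_l + δ_l) set f_{n+1}^l := f_n^l, otherwise set u_n^l := P_{X_{j_l}}(B_l* w_n^l), α_n^l := ⟪w_n^l, g_l⟫, ξ_n^l := (ρ' η_l + δ_l)‖w_n^l‖,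 t_n^l := (⟪u_n^l, f_n^l⟫ − (α_n^l + ξ_n^l))/‖u_n^l‖², and f_{n+1}^l := f_n^l − t_n^l u_n^l. Define the exact SESOP iterates (f_n)_{n∈ℕ} in X starting from some f_0 ∈ (ker A)^⊥ with ‖f_0‖ ≤ ρ' by: given f_n, set w_n := A f_n − g; if w_n = 0 set f_{n+1} := f_n, otherwise u_n := A* w_n, t_n := (⟪u_n, f_n⟫ − ⟪w_n, g⟫)/‖u_n‖², f_{n+1} := f_n − t_n u_n. Assume f_0^l → f_0 in X, assume the step sizes t_n^l and t_n are uniformly bounded over all n and l, and for each l let n_*(l) := min{n ∈ ℕ : ‖B_l f_n^l − g_l‖ ≤ τ(ρ' η_l + δ_l)}, assumed finite for every l. Then lim_{l→∞} f_{n_*(l)}^l = P_{M_A(g)} f_0, the metric projection of f_0 onto the solution set M_A(g) := {x ∈ X : A x = g}, which is the minimum-norm solution of A f = g. -/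

import Mathlib

open Filter
open scoped RealInnerProductSpace

private lemma aux_mem_orthogonal_of_min {X : Type*} [NormedAddCommGroup X]
    [InnerProductSpace ℝ X] (K : Submodule ℝ X) (u : X)
    (h : ∀ k ∈ K, ‖u‖ ≤ ‖u - k‖) : u ∈ Kᗮ := by
  rw [Submodule.mem_orthogonal]
  intro k hk
  rw [real_inner_comm]
  rcases eq_or_ne k 0 with rfl | hk0
  · simp
  have hkn : 0 < ‖k‖ := norm_pos_iff.mpr hk0
  set c : ℝ := ⟪u, k⟫ with hc
  set s : ℝ := c / ‖k‖ ^ 2 with hs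
  have hmem : s • k ∈ K := K.smul_mem s hk
  have h1 := h (s • k) hmem
  have h2 : ‖u - s • k‖ ^ 2 = ‖u‖ ^ 2 - 2 * (s * c) + s ^ 2 * ‖k‖ ^ 2 := by
    rw [norm_sub_sq_real, real_inner_smul_right, norm_smul,
      Real.norm_eq_abs, mul_pow, sq_abs]
  have h3 : ‖u‖ ^ 2 ≤ ‖u - s • k‖ ^ 2 := by
    apply pow_le_pow_left₀ (norm_nonneg _) h1
  rw [h2] at h3
  have hsc : s * ‖k‖ ^ 2 = c := by
    rw [hs, div_mul_cancel₀ _ (by positivity)]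
  show c = 0
  nlinarith [sq_nonneg s, sq_nonneg c, sq_nonneg (s * ‖k‖)]

private lemma aux_proj_dist_le {X : Type*} [NormedAddCommGroup X] [InnerProductSpace ℝ X]
    (V : Submodule ℝ X) [CompleteSpace V] (y : X) {v : X} (hv : v ∈ V) :
    ‖y - (Submodule.orthogonalProjectionOnto V y : X)‖ ≤ ‖y - v‖ := by
  rw [← Submodule.starProjection_apply, Submodule.starProjection_minimal]
  exact ciInf_le ⟨0, by rintro r ⟨x, rfl⟩; exact norm_nonneg _⟩ (⟨v, hv⟩ : V)

private lemma aux_bounded_below {X Y : Type*} [NormedAddCommGroup X] [InnerProductSpace ℝ X]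
    [CompleteSpace X] [NormedAddCommGroup Y] [InnerProductSpace ℝ Y] [FiniteDimensional ℝ Y]
    (A : X →L[ℝ] Y) (hs : Function.Surjective A) :
    ∃ c : ℝ, 0 ≤ c ∧ ∀ x ∈ (LinearMap.ker (A : X →ₗ[ℝ] Y))ᗮ, ‖x‖ ≤ c * ‖A x‖ := by
  haveI : CompleteSpace (LinearMap.ker (A : X →ₗ[ℝ] Y)) :=
    (ContinuousLinearMap.isClosed_ker A).completeSpace_coe
  set K : Submodule ℝ X := (LinearMap.ker (A : X →ₗ[ℝ] Y))ᗮ with hKdef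
  set φ : K →ₗ[ℝ] Y := (A : X →ₗ[ℝ] Y).domRestrict K with hφdef
  have hφinj : Function.Injective φ := by
    rw [← LinearMap.ker_eq_bot, LinearMap.ker_eq_bot']
    rintro ⟨x, hx⟩ hφx
    have hxker : x ∈ LinearMap.ker (A : X →ₗ[ℝ] Y) := by
      simpa [hφdef, LinearMap.mem_ker, LinearMap.domRestrict_apply] using hφx
    have : ⟪x, x⟫ = 0 := by
      have := (Submodule.mem_orthogonal _ x).mp hx x hxker
      simpa [real_inner_comm] using this
    have hx0 : x = 0 := inner_self_eq_zero.mp this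
    exact Subtype.ext hx0
  have hφsurj : Function.Surjective φ := by
    intro y
    obtain ⟨x, hx⟩ := hs y
    refine ⟨⟨x - (Submodule.orthogonalProjectionOnto (LinearMap.ker (A : X →ₗ[ℝ] Y)) x : X),
      Submodule.sub_starProjection_mem_orthogonal x⟩, ?_⟩
    have hker : A ((Submodule.orthogonalProjectionOnto (LinearMap.ker (A : X →ₗ[ℝ] Y)) x : X)) = 0 :=
      (Submodule.orthogonalProjectionOnto (LinearMap.ker (A : X →ₗ[ℝ] Y)) x).2
    simp only [Submodule.coe_orthogonalProjectionOnto_apply] at hker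
    simp [hφdef, LinearMap.domRestrict_apply, map_sub, hker, hx]
  haveI : FiniteDimensional ℝ K := FiniteDimensional.of_injective φ hφinj
  set e : K ≃ₗ[ℝ] Y := LinearEquiv.ofBijective φ ⟨hφinj, hφsurj⟩ with hedef
  set ψ : Y →L[ℝ] X := LinearMap.toContinuousLinearMap (K.subtype ∘ₗ (e.symm : Y →ₗ[ℝ] K)) with hψdef
  refine ⟨‖ψ‖, norm_nonneg _, ?_⟩
  intro x hx
  have h1 : ψ (A x) = x := by
    have he : e ⟨x, hx⟩ = A x := rfl
    have : ψ (A x) = (K.subtype (e.symm (A x)) : X) := rfl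
    rw [this, ← he, LinearEquiv.symm_apply_apply]
    rfl
  have h2 : ‖ψ (A x)‖ ≤ ‖ψ‖ * ‖A x‖ := ψ.le_opNorm _
  rw [h1] at h2
  exact h2

private lemma aux_right_inverse {X Y : Type*} [NormedAddCommGroup X] [InnerProductSpace ℝ X]
    [NormedAddCommGroup Y] [InnerProductSpace ℝ Y] [FiniteDimensional ℝ Y]
    (A : X →L[ℝ] Y) (V : Submodule ℝ X) (hs : ∀ y : Y, ∃ v ∈ V, A v = y) :
    ∃ Rn : ℝ, 0 ≤ Rn ∧ ∀ y : Y, ∃ r ∈ V, A r = y ∧ ‖r‖ ≤ Rn * ‖y‖ := by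
  classical
  set b := Module.finBasis ℝ Y with hbdef
  choose v hvmem hvA using fun i => hs (b i)
  set R' : Y →ₗ[ℝ] V := b.constr ℝ (fun i => (⟨v i, hvmem i⟩ : V)) with hR'def
  set Rl : Y →ₗ[ℝ] X := V.subtype ∘ₗ R' with hRldef
  have hAR : ∀ y : Y, A (Rl y) = y := by
    intro y
    have : (A : X →ₗ[ℝ] Y) ∘ₗ Rl = LinearMap.id := by
      apply b.ext
      intro i
      simp [hRldef, hR'def, Module.Basis.constr_basis, hvA]
    calc A (Rl y) = ((A : X →ₗ[ℝ] Y) ∘ₗ Rl) y := rfl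
    _ = y := by rw [this]; rfl
  set Rc : Y →L[ℝ] X := LinearMap.toContinuousLinearMap Rl with hRcdef
  refine ⟨‖Rc‖, norm_nonneg _, ?_⟩
  intro y
  refine ⟨Rc y, ?_, ?_, Rc.le_opNorm y⟩
  · have : Rc y = V.subtype (R' y) := rfl
    rw [this]
    exact (R' y).2
  · exact hAR y


set_option maxHeartbeats 1000000 in
/-- (Regularization property of the fully-discrete RESESOP method.)
In the setting of Statement 12, with moreover `(η l, δ l) ≠ (0,0)` for all `l`, and with
`nstar l` the finite stopping index (the least `n` with
`‖B l (f l n) - gl l‖ ≤ τ(ρ' η l + δ l)`), the outputs `f l (nstar l)` converge, as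
`l → ∞`, to the metric projection `q` of `fex 0` onto the solution set
`M_A(g) = {x : A x = g}`, which is the minimum-norm solution of `A f = g`. -/
theorem resesop_outputs_converge_to_projection
    {X Y : Type*} [NormedAddCommGroup X] [InnerProductSpace ℝ X] [CompleteSpace X]
    [NormedAddCommGroup Y] [InnerProductSpace ℝ Y] [FiniteDimensional ℝ Y]
    (A : X →L[ℝ] Y)
    (Xs : ℕ → Submodule ℝ X) [∀ i, CompleteSpace (Xs i)]
    (hmono : ∀ i, Xs i ≤ Xs (i + 1))
    (hdense : ((LinearMap.ker (A : X →ₗ[ℝ] Y))ᗮ : Set X) ⊆ closure (⋃ i, (Xs i : Set X)))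
    (hsurj : ∀ i, ∀ y : Y, ∃ v ∈ Xs i, A v = y)
    (g : Y) (ρ' τ : ℝ) (hτ : 1 < τ)
    (hsol : ∃ z ∈ Xs 0, A z = g ∧ ‖z‖ ≤ ρ')
    (η δ : ℕ → ℝ) (hη0 : ∀ l, 0 ≤ η l) (hδ0 : ∀ l, 0 ≤ δ l)
    (hηδne : ∀ l, ¬(η l = 0 ∧ δ l = 0))
    (hηlim : Tendsto η atTop (nhds 0)) (hδlim : Tendsto δ atTop (nhds 0))
    (j : ℕ → ℕ) (hj : Tendsto j atTop atTop)
    (B : ℕ → X →L[ℝ] Y) (hB : ∀ l, ‖B l - A‖ ≤ η l)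
    (gl : ℕ → Y) (hgl : ∀ l, ‖gl l - g‖ ≤ δ l)
    -- the RESESOP iterates
    (f : ℕ → ℕ → X)
    (hf0mem : ∀ l, f l 0 ∈ Xs (j l)) (hf0norm : ∀ l, ‖f l 0‖ ≤ ρ')
    (hf0orth : ∀ l, ∀ v : X, v ∈ Xs (j l) → A v = 0 → ⟪f l 0, v⟫ = 0)
    (w : ℕ → ℕ → Y) (hw : ∀ l n, w l n = B l (f l n) - gl l)
    (u : ℕ → ℕ → X)
    (hu : ∀ l n, u l n = (Submodule.orthogonalProjectionOnto (Xs (j l)) ((B l).adjoint (w l n)) : X))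
    (t : ℕ → ℕ → ℝ)
    (ht : ∀ l n, t l n =
      (⟪u l n, f l n⟫ - (⟪w l n, gl l⟫ + (ρ' * η l + δ l) * ‖w l n‖)) / ‖u l n‖ ^ 2)
    (hstep : ∀ l n,
      (‖w l n‖ ≤ τ * (ρ' * η l + δ l) → f l (n + 1) = f l n) ∧
      (¬ ‖w l n‖ ≤ τ * (ρ' * η l + δ l) → f l (n + 1) = f l n - t l n • u l n))
    -- the exact SESOP iterates
    (fex : ℕ → X) (hfex0 : fex 0 ∈ (LinearMap.ker (A : X →ₗ[ℝ] Y))ᗮ) (hfex0norm : ‖fex 0‖ ≤ ρ')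
    (wex : ℕ → Y) (hwex : ∀ n, wex n = A (fex n) - g)
    (uex : ℕ → X) (huex : ∀ n, uex n = A.adjoint (wex n))
    (tex : ℕ → ℝ)
    (htex : ∀ n, tex n = (⟪uex n, fex n⟫ - ⟪wex n, g⟫) / ‖uex n‖ ^ 2)
    (hexstep : ∀ n,
      (wex n = 0 → fex (n + 1) = fex n) ∧
      (wex n ≠ 0 → fex (n + 1) = fex n - tex n • uex n))
    -- convergence of the start iterates and uniform boundedness of the step sizes
    (hstart : Tendsto (fun l => f l 0) atTop (nhds (fex 0)))
    (C : ℝ) (hC : ∀ l n, |t l n| ≤ C) (hCex : ∀ n, |tex n| ≤ C)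
    -- the finite stopping indices
    (nstar : ℕ → ℕ)
    (hnstar : ∀ l, ‖w l (nstar l)‖ ≤ τ * (ρ' * η l + δ l) ∧
      ∀ m < nstar l, ¬ ‖w l m‖ ≤ τ * (ρ' * η l + δ l))
    -- the metric projection of `fex 0` onto the solution set `M_A(g)`
    (q : X) (hqsol : A q = g)
    (hqproj : ∀ z : X, A z = g → ‖fex 0 - q‖ ≤ ‖fex 0 - z‖) :
    Tendsto (fun l => f l (nstar l)) atTop (nhds q) ∧
      ∀ z : X, A z = g → ‖q‖ ≤ ‖z‖ := by
  classical
  obtain ⟨z₀, hz₀mem, hz₀sol, hz₀norm⟩ := hsol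
  have hρ' : (0:ℝ) ≤ ρ' := le_trans (norm_nonneg z₀) hz₀norm
  have hAsurj : Function.Surjective A := fun y => by
    obtain ⟨v, _, hv⟩ := hsurj 0 y; exact ⟨v, hv⟩
  obtain ⟨c, hc0, hc⟩ := aux_bounded_below A hAsurj
  have hmono' : ∀ {i k : ℕ}, i ≤ k → Xs i ≤ Xs k := by
    intro i k hik
    induction k, hik using Nat.le_induction with
    | base => exact le_rfl
    | succ k hk ih => exact le_trans ih (hmono k)
  have hθ0 : ∀ l, (0:ℝ) ≤ ρ' * η l + δ l := fun l =>
    add_nonneg (mul_nonneg hρ' (hη0 l)) (hδ0 l)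
  have hθlim : Tendsto (fun l => ρ' * η l + δ l) atTop (nhds 0) := by
    have := (hηlim.const_mul ρ').add hδlim
    simpa using this
  have hτθlim : Tendsto (fun l => τ * (ρ' * η l + δ l)) atTop (nhds 0) := by
    simpa using hθlim.const_mul τ
  have hgllim : Tendsto gl atTop (nhds g) := by
    rw [tendsto_iff_norm_sub_tendsto_zero]
    exact squeeze_zero (fun l => norm_nonneg _) hgl hδlim
  -- `q` lies in the orthogonal complement of the kernel
  have hsubK : fex 0 - q ∈ (LinearMap.ker (A : X →ₗ[ℝ] Y))ᗮ := by
    apply aux_mem_orthogonal_of_min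
    intro k hk
    have hsol' : A (q + k) = g := by
      rw [map_add, hqsol, (show A k = 0 from LinearMap.mem_ker.mp hk), add_zero]
    have := hqproj (q + k) hsol'
    simpa [sub_add_eq_sub_sub] using this
  have hqK : q ∈ (LinearMap.ker (A : X →ₗ[ℝ] Y))ᗮ := by
    have := Submodule.sub_mem _ hfex0 hsubK
    simpa using this
  -- minimum-norm property
  have hminnorm : ∀ z : X, A z = g → ‖q‖ ≤ ‖z‖ := by
    intro z hz
    have hker : z - q ∈ LinearMap.ker (A : X →ₗ[ℝ] Y) := by
      simp [LinearMap.mem_ker, map_sub, hz, hqsol]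
    have horth : ⟪z - q, q⟫ = 0 := (Submodule.mem_orthogonal _ q).mp hqK _ hker
    have hexp : ‖z‖ ^ 2 = ‖q‖ ^ 2 + 2 * ⟪q, z - q⟫ + ‖z - q‖ ^ 2 := by
      have := norm_add_sq_real q (z - q)
      simpa using this
    rw [real_inner_comm, horth] at hexp
    nlinarith [norm_nonneg (z - q), norm_nonneg z, norm_nonneg q]
  -- any solution in the orthogonal complement equals `q`
  have hsol_unique : ∀ x : X, x ∈ (LinearMap.ker (A : X →ₗ[ℝ] Y))ᗮ → A x = g → x = q := by
    intro x hx hAx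
    have hker : x - q ∈ LinearMap.ker (A : X →ₗ[ℝ] Y) := by
      simp [LinearMap.mem_ker, map_sub, hAx, hqsol]
    have hmem : x - q ∈ (LinearMap.ker (A : X →ₗ[ℝ] Y))ᗮ := Submodule.sub_mem _ hx hqK
    have h0 : ⟪x - q, x - q⟫ = 0 := (Submodule.mem_orthogonal _ _).mp hmem _ hker
    exact sub_eq_zero.mp (inner_self_eq_zero.mp h0)
  -- adjoint facts
  have hadj_injY : ∀ y : Y, A.adjoint y = 0 → y = 0 := by
    intro y hy
    obtain ⟨x, hx⟩ := hAsurj y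
    have h0 : ⟪y, y⟫ = (0:ℝ) := by
      calc ⟪y, y⟫ = ⟪y, A x⟫ := by rw [hx]
      _ = ⟪A.adjoint y, x⟫ := (ContinuousLinearMap.adjoint_inner_left A x y).symm
      _ = 0 := by rw [hy, inner_zero_left]
    exact inner_self_eq_zero.mp h0
  have hadjK : ∀ y : Y, A.adjoint y ∈ (LinearMap.ker (A : X →ₗ[ℝ] Y))ᗮ := by
    intro y
    rw [Submodule.mem_orthogonal]
    intro x hx
    rw [ContinuousLinearMap.adjoint_inner_right, (show A x = 0 from LinearMap.mem_ker.mp hx), inner_zero_left]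
  -- exact iterates lie in the orthogonal complement
  have hfexK : ∀ n, fex n ∈ (LinearMap.ker (A : X →ₗ[ℝ] Y))ᗮ := by
    intro n
    induction n with
    | zero => exact hfex0
    | succ n ih =>
      rcases eq_or_ne (wex n) 0 with h0 | hne
      · rw [(hexstep n).1 h0]; exact ih
      · rw [(hexstep n).2 hne]
        exact Submodule.sub_mem _ ih
          (Submodule.smul_mem _ _ (by rw [huex n]; exact hadjK (wex n)))
  have hfexdist : ∀ n, ‖fex n - q‖ ≤ c * ‖wex n‖ := by
    intro n
    have h0 := hc _ (Submodule.sub_mem _ (hfexK n) hqK)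
    rwa [map_sub, hqsol, ← hwex n] at h0
  -- one-step decrease of the exact iterates
  have hexkey : ∀ n, ‖fex (n+1) - q‖ ^ 2 ≤ ‖fex n - q‖ ^ 2 ∧
      ‖wex n‖ ^ 2 ≤ ‖A‖ ^ 2 * (‖fex n - q‖ ^ 2 - ‖fex (n+1) - q‖ ^ 2) := by
    intro n
    rcases eq_or_ne (wex n) 0 with h0 | hne
    · rw [(hexstep n).1 h0, h0]; simp
    · have hstep' := (hexstep n).2 hne
      have hune : uex n ≠ 0 := by
        intro h
        exact hne (hadj_injY _ (by rw [← huex n]; exact h))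
      have hu2 : (0:ℝ) < ‖uex n‖ ^ 2 := pow_pos (norm_pos_iff.mpr hune) 2
      have hiuf : ⟪uex n, fex n - q⟫ = ‖wex n‖ ^ 2 := by
        rw [huex n, ContinuousLinearMap.adjoint_inner_left, map_sub, hqsol, ← hwex n,
          real_inner_self_eq_norm_sq]
      have hiuf2 : ⟪uex n, fex n⟫ - ⟪wex n, g⟫ = ‖wex n‖ ^ 2 := by
        rw [huex n, ContinuousLinearMap.adjoint_inner_left, ← inner_sub_right, ← hwex n,
          real_inner_self_eq_norm_sq]
      have htexval : tex n = ‖wex n‖ ^ 2 / ‖uex n‖ ^ 2 := by rw [htex n, hiuf2]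
      have htex0 : 0 ≤ tex n := by
        rw [htexval]; positivity
      have htu : tex n * ‖uex n‖ ^ 2 = ‖wex n‖ ^ 2 := by
        rw [htexval]; field_simp
      have htu2 : tex n ^ 2 * ‖uex n‖ ^ 2 = tex n * ‖wex n‖ ^ 2 := by
        rw [pow_two, mul_assoc, htu]
      have hexpand : ‖fex (n+1) - q‖ ^ 2
          = ‖fex n - q‖ ^ 2 - 2 * (tex n * ‖wex n‖ ^ 2) + tex n ^ 2 * ‖uex n‖ ^ 2 := by
        have e1 : ⟪fex n - q, uex n⟫ = ‖wex n‖ ^ 2 := by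
          rw [real_inner_comm]; exact hiuf
        rw [hstep', sub_right_comm, norm_sub_sq_real, real_inner_smul_right, e1,
          norm_smul, Real.norm_eq_abs, mul_pow, sq_abs]
      constructor
      · nlinarith [htex0, sq_nonneg (‖wex n‖)]
      · have hAu : ‖uex n‖ ≤ ‖A‖ * ‖wex n‖ := by
          rw [huex n]
          calc ‖A.adjoint (wex n)‖ ≤ ‖A.adjoint‖ * ‖wex n‖ := A.adjoint.le_opNorm _
          _ = ‖A‖ * ‖wex n‖ := by rw [ContinuousLinearMap.adjoint.norm_map]
        have h4 : ‖uex n‖ ^ 2 ≤ ‖A‖ ^ 2 * ‖wex n‖ ^ 2 := by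
          nlinarith [norm_nonneg (uex n), norm_nonneg (wex n), norm_nonneg (A : X →L[ℝ] Y)]
        nlinarith [htex0, htu, h4]
  -- convergence of the exact iterates to q
  have hfexlim : Tendsto fex atTop (nhds q) := by
    have hanti : Antitone (fun n => ‖fex n - q‖ ^ 2) :=
      antitone_nat_of_succ_le (fun n => (hexkey n).1)
    have hbdd : BddBelow (Set.range (fun n => ‖fex n - q‖ ^ 2)) :=
      ⟨0, by rintro r ⟨n, rfl⟩; positivity⟩
    have hd2lim := tendsto_atTop_ciInf hanti hbdd
    have hshift : Tendsto (fun n => ‖fex (n+1) - q‖ ^ 2) atTop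
        (nhds (⨅ i, ‖fex i - q‖ ^ 2)) := (tendsto_add_atTop_iff_nat 1).mpr hd2lim
    have hdiff : Tendsto (fun n => ‖fex n - q‖ ^ 2 - ‖fex (n+1) - q‖ ^ 2) atTop (nhds 0) := by
      simpa using hd2lim.sub hshift
    have hwsq : Tendsto (fun n => ‖wex n‖ ^ 2) atTop (nhds 0) := by
      apply squeeze_zero (fun n => by positivity) (fun n => (hexkey n).2)
      simpa using hdiff.const_mul (‖A‖ ^ 2)
    have hwnorm : Tendsto (fun n => ‖wex n‖) atTop (nhds 0) := by
      have h := (Real.continuous_sqrt.tendsto 0).comp hwsq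
      have heq : (fun n => Real.sqrt (‖wex n‖ ^ 2)) = fun n => ‖wex n‖ := by
        funext n; exact Real.sqrt_sq (norm_nonneg _)
      simpa [Function.comp_def, heq] using h
    rw [tendsto_iff_norm_sub_tendsto_zero]
    apply squeeze_zero (fun n => norm_nonneg _) hfexdist
    simpa using hwnorm.const_mul c
  -- discrete iterates stay in the subspace
  have hfmem : ∀ l n, f l n ∈ Xs (j l) := by
    intro l n
    induction n with
    | zero => exact hf0mem l
    | succ n ih =>
      by_cases hn : ‖w l n‖ ≤ τ * (ρ' * η l + δ l)
      · rw [(hstep l n).1 hn]; exact ih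
      · rw [(hstep l n).2 hn]
        exact Submodule.sub_mem _ ih
          (Submodule.smul_mem _ _ (by rw [hu l n]; exact SetLike.coe_mem _))
  -- one-step Fejér monotonicity for the discrete iterates
  have hfejer_step : ∀ l n (z : X), z ∈ Xs (j l) → A z = g → ‖z‖ ≤ ρ' →
      ¬ ‖w l n‖ ≤ τ * (ρ' * η l + δ l) → ‖f l (n+1) - z‖ ≤ ‖f l n - z‖ := by
    intro l n z hzmem hzsol hznorm hns
    have hτθ : τ * (ρ' * η l + δ l) < ‖w l n‖ := not_le.mp hns
    have hwpos : 0 < ‖w l n‖ := by nlinarith [hθ0 l]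
    have hwub : ρ' * η l + δ l ≤ ‖w l n‖ := by nlinarith [hθ0 l]
    have hprojF : ∀ F : X, F ∈ Xs (j l) → ⟪u l n, F⟫ = ⟪w l n, B l F⟫ := by
      intro F hF
      have h0 := Submodule.starProjection_inner_eq_zero ((B l).adjoint (w l n)) F hF
      rw [inner_sub_left, sub_eq_zero] at h0
      rw [hu l n, ← Submodule.starProjection_apply, ← h0]
      exact ContinuousLinearMap.adjoint_inner_left _ _ _
    have hBf : B l (f l n) = w l n + gl l := by rw [hw l n, sub_add_cancel]
    have hkey1 : ⟪u l n, f l n⟫ = ‖w l n‖ ^ 2 + ⟪w l n, gl l⟫ := by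
      rw [hprojF _ (hfmem l n), hBf, inner_add_right, real_inner_self_eq_norm_sq]
    have hBz : ‖B l z - gl l‖ ≤ ρ' * η l + δ l := by
      have h1 : B l z - gl l = (B l - A) z + (g - gl l) := by
        rw [ContinuousLinearMap.sub_apply, hzsol]
        abel
      rw [h1]
      have h2 : ‖(B l - A) z‖ ≤ ρ' * η l := by
        calc ‖(B l - A) z‖ ≤ ‖B l - A‖ * ‖z‖ := (B l - A).le_opNorm z
        _ ≤ ρ' * η l := by nlinarith [norm_nonneg (B l - A), norm_nonneg z, hB l, hη0 l]
      have h3 : ‖g - gl l‖ ≤ δ l := by rw [norm_sub_rev]; exact hgl l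
      calc ‖(B l - A) z + (g - gl l)‖ ≤ ‖(B l - A) z‖ + ‖g - gl l‖ := norm_add_le _ _
      _ ≤ ρ' * η l + δ l := add_le_add h2 h3
    have hkey2 : ⟪u l n, z⟫ ≤ ⟪w l n, gl l⟫ + (ρ' * η l + δ l) * ‖w l n‖ := by
      rw [hprojF _ hzmem]
      have h1 : ⟪w l n, B l z⟫ = ⟪w l n, gl l⟫ + ⟪w l n, B l z - gl l⟫ := by
        rw [← inner_add_right, add_sub_cancel]
      rw [h1]
      have h4 : ⟪w l n, B l z - gl l⟫ ≤ ‖w l n‖ * ‖B l z - gl l‖ := real_inner_le_norm _ _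
      have h5 : ‖w l n‖ * ‖B l z - gl l‖ ≤ ‖w l n‖ * (ρ' * η l + δ l) :=
        mul_le_mul_of_nonneg_left hBz (norm_nonneg _)
      nlinarith
    have hune : u l n ≠ 0 := by
      intro h0
      rw [h0, inner_zero_left] at hkey1 hkey2
      nlinarith [hθ0 l]
    have hupos : (0:ℝ) < ‖u l n‖ ^ 2 := pow_pos (norm_pos_iff.mpr hune) 2
    have htval : t l n * ‖u l n‖ ^ 2
        = ⟪u l n, f l n⟫ - (⟪w l n, gl l⟫ + (ρ' * η l + δ l) * ‖w l n‖) := by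
      rw [ht l n]
      field_simp
    have htpos : 0 ≤ t l n := by
      rw [ht l n]
      apply div_nonneg _ (le_of_lt hupos)
      rw [hkey1]
      nlinarith
    have hstep' := (hstep l n).2 hns
    have hexp : ‖f l (n+1) - z‖ ^ 2
        = ‖f l n - z‖ ^ 2 - 2 * (t l n * ⟪u l n, f l n - z⟫) + t l n ^ 2 * ‖u l n‖ ^ 2 := by
      have e1 : ⟪f l n - z, u l n⟫ = ⟪u l n, f l n - z⟫ := real_inner_comm _ _
      rw [hstep', sub_right_comm, norm_sub_sq_real, real_inner_smul_right, e1,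
        norm_smul, Real.norm_eq_abs, mul_pow, sq_abs]
    have hlow : t l n * ‖u l n‖ ^ 2 ≤ ⟪u l n, f l n - z⟫ := by
      rw [inner_sub_right, htval]
      linarith
    have hfinal : ‖f l (n+1) - z‖ ^ 2 ≤ ‖f l n - z‖ ^ 2 := by nlinarith
    nlinarith [norm_nonneg (f l (n+1) - z), norm_nonneg (f l n - z)]
  -- Fejér monotonicity up to the stopping index
  have hfejer : ∀ l (z : X), z ∈ Xs (j l) → A z = g → ‖z‖ ≤ ρ' →
      ∀ n m : ℕ, n ≤ m → m ≤ nstar l → ‖f l m - z‖ ≤ ‖f l n - z‖ := by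
    intro l z hzm hzs hzn n m hnm
    induction m, hnm using Nat.le_induction with
    | base => intro _; exact le_rfl
    | succ m hnm ih =>
      intro hm
      have hmlt : m < nstar l := hm
      have hns := (hnstar l).2 m hmlt
      exact le_trans (hfejer_step l m z hzm hzs hzn hns) (ih (Nat.le_of_succ_le hm))
  -- orthogonal projections are 1-Lipschitz
  have hprojle : ∀ (i : ℕ) (x : X), ‖(Submodule.orthogonalProjectionOnto (Xs i) x : X)‖ ≤ ‖x‖ := by
    intro i x
    have h1 := (Submodule.orthogonalProjectionOnto (Xs i)).le_opNorm x
    have h2 := Submodule.orthogonalProjectionOnto_norm_le (Xs i)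
    have h3 : ‖(Submodule.orthogonalProjectionOnto (Xs i) x : X)‖ = ‖Submodule.orthogonalProjectionOnto (Xs i) x‖ := rfl
    rw [h3]
    nlinarith [norm_nonneg x, norm_nonneg (Submodule.orthogonalProjectionOnto (Xs i) x)]
  -- distance to the growing subspaces tends to zero on (ker A)ᗮ
  have hprojtend : ∀ x : X, x ∈ (LinearMap.ker (A : X →ₗ[ℝ] Y))ᗮ →
      Tendsto (fun l => ‖(Submodule.orthogonalProjectionOnto (Xs (j l)) x : X) - x‖) atTop (nhds 0) := by
    intro x hx
    rw [Metric.tendsto_atTop]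
    intro ε hε
    have hx' : x ∈ closure (⋃ i, (Xs i : Set X)) := hdense hx
    obtain ⟨v, hv, hvx⟩ := Metric.mem_closure_iff.mp hx' ε hε
    obtain ⟨J, hJ⟩ := Set.mem_iUnion.mp hv
    obtain ⟨L, hL⟩ := Filter.eventually_atTop.mp (hj.eventually_ge_atTop J)
    refine ⟨L, fun l hl => ?_⟩
    have hvmem : v ∈ Xs (j l) := hmono' (hL l hl) hJ
    have h1 : ‖x - (Submodule.orthogonalProjectionOnto (Xs (j l)) x : X)‖ ≤ ‖x - v‖ :=
      aux_proj_dist_le _ _ hvmem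
    have h2 : ‖(Submodule.orthogonalProjectionOnto (Xs (j l)) x : X) - x‖ ≤ ‖x - v‖ := by
      rw [norm_sub_rev]; exact h1
    have hxv : ‖x - v‖ < ε := by rw [← dist_eq_norm]; exact hvx
    rw [Real.dist_eq, sub_zero, abs_of_nonneg (norm_nonneg _)]
    linarith
  have hC0 : (0:ℝ) ≤ C := le_trans (abs_nonneg _) (hC 0 0)
  -- stability: for each fixed n the discrete iterates converge to the exact ones
  have hstab : ∀ n, Tendsto (fun l => f l n) atTop (nhds (fex n)) := by
    intro n
    induction n with
    | zero => exact hstart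
    | succ n ih =>
      have hwlim : Tendsto (fun l => w l n) atTop (nhds (wex n)) := by
        have h1 : Tendsto (fun l => (B l - A) (f l n)) atTop (nhds 0) := by
          refine squeeze_zero_norm (a := fun l => η l * ‖f l n‖) (fun l => ?_) ?_
          · exact le_trans ((B l - A).le_opNorm _)
              (mul_le_mul_of_nonneg_right (hB l) (norm_nonneg _))
          · have := hηlim.mul ih.norm
            simpa using this
        have h2 : Tendsto (fun l => A (f l n)) atTop (nhds (A (fex n))) :=
          (A.continuous.tendsto _).comp ih
        have h4 : (fun l => w l n)
            = fun l => (B l - A) (f l n) + (A (f l n) - gl l) := by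
          funext l; rw [hw l n, ContinuousLinearMap.sub_apply]; abel
        rw [h4, hwex n]
        have h5 := h1.add (h2.sub hgllim)
        simpa using h5
      rcases eq_or_ne (wex n) 0 with h0 | hne
      · -- vanishing exact residual: the discrete step tends to zero
        have hwn0 : Tendsto (fun l => ‖w l n‖) atTop (nhds 0) := by
          have := hwlim.norm; rwa [h0, norm_zero] at this
        have hdiff : Tendsto (fun l => f l (n+1) - f l n) atTop (nhds 0) := by
          refine squeeze_zero_norm (a := fun l => C * ((‖A‖ + η l) * ‖w l n‖)) (fun l => ?_) ?_
          · by_cases hn : ‖w l n‖ ≤ τ * (ρ' * η l + δ l)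
            · rw [(hstep l n).1 hn, sub_self, norm_zero]
              exact mul_nonneg hC0
                (mul_nonneg (add_nonneg (norm_nonneg _) (hη0 l)) (norm_nonneg _))
            · rw [(hstep l n).2 hn]
              have e : f l n - t l n • u l n - f l n = -(t l n • u l n) := by abel
              rw [e, norm_neg, norm_smul, Real.norm_eq_abs]
              have hBop : ‖(B l).adjoint‖ ≤ ‖A‖ + η l := by
                rw [ContinuousLinearMap.adjoint.norm_map]
                have e2 : B l = A + (B l - A) := by abel
                calc ‖B l‖ = ‖A + (B l - A)‖ := by rw [← e2]
                _ ≤ ‖A‖ + ‖B l - A‖ := norm_add_le _ _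
                _ ≤ ‖A‖ + η l := add_le_add_right (hB l) _
              have hub : ‖u l n‖ ≤ (‖A‖ + η l) * ‖w l n‖ := by
                rw [hu l n]
                refine le_trans (hprojle (j l) _) ?_
                calc ‖(B l).adjoint (w l n)‖ ≤ ‖(B l).adjoint‖ * ‖w l n‖ :=
                  ((B l).adjoint).le_opNorm _
                _ ≤ (‖A‖ + η l) * ‖w l n‖ :=
                  mul_le_mul_of_nonneg_right hBop (norm_nonneg _)
              exact mul_le_mul (hC l n) hub (norm_nonneg _) hC0
          · have h6 : Tendsto (fun l => (‖A‖ + η l) * ‖w l n‖) atTop (nhds ((‖A‖ + 0) * 0)) :=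
              (tendsto_const_nhds.add hηlim).mul hwn0
            have h7 := h6.const_mul C
            simpa using h7
        have hfeq : fex (n+1) = fex n := (hexstep n).1 h0
        rw [hfeq]
        have h8 : (fun l => f l (n+1)) = fun l => f l n + (f l (n+1) - f l n) := by
          funext l; abel
        rw [h8]
        simpa using ih.add hdiff
      · -- nonvanishing exact residual
        have huexne : uex n ≠ 0 := fun h => hne (hadj_injY _ (by rw [← huex n]; exact h))
        have huexK : uex n ∈ (LinearMap.ker (A : X →ₗ[ℝ] Y))ᗮ := by rw [huex n]; exact hadjK _
        have hadjlim : Tendsto (fun l => (B l).adjoint (w l n)) atTop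
            (nhds (A.adjoint (wex n))) := by
          have h1 : Tendsto (fun l => ((B l).adjoint - A.adjoint) (w l n)) atTop (nhds 0) := by
            refine squeeze_zero_norm (a := fun l => η l * ‖w l n‖) (fun l => ?_) ?_
            · have hBA : (B l).adjoint - A.adjoint = (B l - A).adjoint :=
                (map_sub (ContinuousLinearMap.adjoint) (B l) A).symm
              rw [hBA]
              refine le_trans ((B l - A).adjoint.le_opNorm _) ?_
              rw [ContinuousLinearMap.adjoint.norm_map]
              exact mul_le_mul_of_nonneg_right (hB l) (norm_nonneg _)
            · have := hηlim.mul hwlim.norm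
              simpa using this
          have h2 : Tendsto (fun l => A.adjoint (w l n)) atTop (nhds (A.adjoint (wex n))) :=
            (A.adjoint.continuous.tendsto _).comp hwlim
          have h3 : (fun l => (B l).adjoint (w l n))
              = fun l => ((B l).adjoint - A.adjoint) (w l n) + A.adjoint (w l n) := by
            funext l; rw [ContinuousLinearMap.sub_apply]; abel
          rw [h3]
          simpa using h1.add h2
        have hulim : Tendsto (fun l => u l n) atTop (nhds (uex n)) := by
          rw [tendsto_iff_norm_sub_tendsto_zero]
          have hb : ∀ l, ‖u l n - uex n‖ ≤ ‖(B l).adjoint (w l n) - uex n‖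
              + ‖(Submodule.orthogonalProjectionOnto (Xs (j l)) (uex n) : X) - uex n‖ := by
            intro l
            have e2 : u l n - uex n
                = ((Submodule.orthogonalProjectionOnto (Xs (j l)) ((B l).adjoint (w l n)) : X)
                    - (Submodule.orthogonalProjectionOnto (Xs (j l)) (uex n) : X))
                  + ((Submodule.orthogonalProjectionOnto (Xs (j l)) (uex n) : X) - uex n) := by
              rw [hu l n]; abel
            have e3 : (Submodule.orthogonalProjectionOnto (Xs (j l)) ((B l).adjoint (w l n)) : X)
                - (Submodule.orthogonalProjectionOnto (Xs (j l)) (uex n) : X)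
                = (Submodule.orthogonalProjectionOnto (Xs (j l)) ((B l).adjoint (w l n) - uex n) : X) := by
              rw [map_sub]; rfl
            rw [e2]
            refine le_trans (norm_add_le _ _) (add_le_add ?_ le_rfl)
            rw [e3]
            exact hprojle (j l) _
          have hbt : Tendsto (fun l => ‖(B l).adjoint (w l n) - uex n‖
              + ‖(Submodule.orthogonalProjectionOnto (Xs (j l)) (uex n) : X) - uex n‖) atTop (nhds 0) := by
            have h4 : Tendsto (fun l => ‖(B l).adjoint (w l n) - uex n‖) atTop (nhds 0) := by
              have := tendsto_iff_norm_sub_tendsto_zero.mp hadjlim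
              rwa [huex n]
            have h5 := hprojtend (uex n) huexK
            simpa using h4.add h5
          exact squeeze_zero (fun l => norm_nonneg _) hb hbt
        have htlim : Tendsto (fun l => t l n) atTop (nhds (tex n)) := by
          have hz : Tendsto (fun l => (ρ' * η l + δ l) * ‖w l n‖) atTop (nhds 0) := by
            have := hθlim.mul hwlim.norm
            simpa using this
          have hnum : Tendsto
              (fun l => ⟪u l n, f l n⟫ - (⟪w l n, gl l⟫ + (ρ' * η l + δ l) * ‖w l n‖))
              atTop (nhds (⟪uex n, fex n⟫ - (⟪wex n, g⟫ + 0))) :=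
            (hulim.inner ih).sub ((hwlim.inner hgllim).add hz)
          have hden : Tendsto (fun l => ‖u l n‖ ^ 2) atTop (nhds (‖uex n‖ ^ 2)) :=
            (hulim.norm).pow 2
          have hdenne : ‖uex n‖ ^ 2 ≠ 0 := ne_of_gt (pow_pos (norm_pos_iff.mpr huexne) 2)
          have h6 := hnum.div hden hdenne
          have h7 : (fun l => t l n) = fun l =>
              (⟪u l n, f l n⟫ - (⟪w l n, gl l⟫ + (ρ' * η l + δ l) * ‖w l n‖)) / ‖u l n‖ ^ 2 := by
            funext l; exact ht l n
          rw [h7, htex n, add_zero] at *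
          exact h6
        have hev : (fun l => f l n - t l n • u l n) =ᶠ[atTop] (fun l => f l (n+1)) := by
          have hpos : (0:ℝ) < ‖wex n‖ := norm_pos_iff.mpr hne
          have h9 : Tendsto (fun l => ‖w l n‖ - τ * (ρ' * η l + δ l)) atTop
              (nhds (‖wex n‖ - 0)) := hwlim.norm.sub hτθlim
          have h10 : ∀ᶠ l in atTop, (0:ℝ) < ‖w l n‖ - τ * (ρ' * η l + δ l) :=
            h9.eventually_const_lt (by simpa using hpos)
          filter_upwards [h10] with l hl
          exact ((hstep l n).2 (not_le.mpr (by linarith))).symm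
        rw [(hexstep n).2 hne]
        exact Tendsto.congr' hev (ih.sub (htlim.smul hulim))
  -- residual stability
  have hwtend : ∀ m, Tendsto (fun l => w l m) atTop (nhds (wex m)) := by
    intro m
    have ih := hstab m
    have h1 : Tendsto (fun l => (B l - A) (f l m)) atTop (nhds 0) := by
      refine squeeze_zero_norm (a := fun l => η l * ‖f l m‖) (fun l => ?_) ?_
      · exact le_trans ((B l - A).le_opNorm _)
          (mul_le_mul_of_nonneg_right (hB l) (norm_nonneg _))
      · have := hηlim.mul ih.norm
        simpa using this
    have h2 : Tendsto (fun l => A (f l m)) atTop (nhds (A (fex m))) :=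
      (A.continuous.tendsto _).comp ih
    have h4 : (fun l => w l m)
        = fun l => (B l - A) (f l m) + (A (f l m) - gl l) := by
      funext l; rw [hw l m, ContinuousLinearMap.sub_apply]; abel
    rw [h4, hwex m]
    have h5 := h1.add (h2.sub hgllim)
    simpa using h5
  -- approximate solutions of norm at most ρ' in the subspaces, close to q
  have happrox : ∀ ε : ℝ, 0 < ε →
      ∃ J : ℕ, ∃ zz : X, zz ∈ Xs J ∧ A zz = g ∧ ‖zz‖ ≤ ρ' ∧ ‖zz - q‖ ≤ ε := by
    intro ε hε
    rcases lt_or_ge ‖q‖ ρ' with hlt | hge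
    · obtain ⟨Rn, hRn0, hR⟩ := aux_right_inverse A (Xs 0) (hsurj 0)
      have hε1pos : 0 < min ε (ρ' - ‖q‖) := lt_min hε (by linarith)
      have hden : (0:ℝ) < 1 + Rn * ‖A‖ := by positivity
      have hε2pos : 0 < min ε (ρ' - ‖q‖) / (1 + Rn * ‖A‖) := div_pos hε1pos hden
      have hq' : q ∈ closure (⋃ i, (Xs i : Set X)) := hdense hqK
      obtain ⟨x, hxmem, hxd⟩ := Metric.mem_closure_iff.mp hq' _ hε2pos
      obtain ⟨J, hJ⟩ := Set.mem_iUnion.mp hxmem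
      obtain ⟨r, hrmem, hrA, hrnorm⟩ := hR (A x - g)
      have hqx : ‖x - q‖ < min ε (ρ' - ‖q‖) / (1 + Rn * ‖A‖) := by
        rw [← norm_sub_rev q x, ← dist_eq_norm]
        exact hxd
      have hAxg : ‖A x - g‖ ≤ ‖A‖ * ‖x - q‖ := by
        rw [← hqsol, ← map_sub]
        exact A.le_opNorm _
      have hrn2 : ‖r‖ ≤ Rn * (‖A‖ * ‖x - q‖) :=
        le_trans hrnorm (mul_le_mul_of_nonneg_left hAxg hRn0)
      have hzzq : ‖x - r - q‖ ≤ min ε (ρ' - ‖q‖) := by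
        have h6 : ‖x - r - q‖ ≤ ‖x - q‖ + ‖r‖ := by
          have e : x - r - q = (x - q) + (-r) := by abel
          rw [e]
          simpa using norm_add_le (x - q) (-r)
        have h7 : ‖x - q‖ + ‖r‖ ≤ (1 + Rn * ‖A‖) * ‖x - q‖ := by nlinarith [norm_nonneg (x - q)]
        have h8 : (1 + Rn * ‖A‖) * ‖x - q‖ ≤ min ε (ρ' - ‖q‖) := by
          rw [← le_div_iff₀' hden]
          exact le_of_lt hqx
        linarith
      refine ⟨J, x - r, ?_, ?_, ?_, ?_⟩
      · exact Submodule.sub_mem _ hJ (hmono' (Nat.zero_le J) hrmem)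
      · rw [map_sub, hrA, sub_sub_cancel]
      · have h9 : ‖x - r‖ ≤ ‖q‖ + ‖x - r - q‖ := by
          have e : q + (x - r - q) = x - r := by abel
          calc ‖x - r‖ = ‖q + (x - r - q)‖ := by rw [e]
          _ ≤ ‖q‖ + ‖x - r - q‖ := norm_add_le _ _
        have := min_le_right ε (ρ' - ‖q‖)
        linarith
      · exact le_trans hzzq (min_le_left _ _)
    · -- here ρ' ≤ ‖q‖, forcing z₀ = q
      have h1 : ‖q‖ ≤ ‖z₀‖ := hminnorm z₀ hz₀sol
      have hker : z₀ - q ∈ LinearMap.ker (A : X →ₗ[ℝ] Y) := by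
        simp [LinearMap.mem_ker, map_sub, hz₀sol, hqsol]
      have horth : ⟪z₀ - q, q⟫ = 0 := (Submodule.mem_orthogonal _ q).mp hqK _ hker
      have hexp : ‖z₀‖ ^ 2 = ‖q‖ ^ 2 + 2 * ⟪q, z₀ - q⟫ + ‖z₀ - q‖ ^ 2 := by
        have := norm_add_sq_real q (z₀ - q)
        simpa using this
      rw [real_inner_comm, horth] at hexp
      have hz0q : ‖z₀ - q‖ = 0 := by
        nlinarith [norm_nonneg (z₀ - q), norm_nonneg q, norm_nonneg z₀]
      have hz0 : z₀ = q := sub_eq_zero.mp (norm_eq_zero.mp hz0q)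
      exact ⟨0, q, hz0 ▸ hz₀mem, hqsol, le_trans h1 hz₀norm, by simpa using le_of_lt hε⟩
  -- final assembly
  refine ⟨?_, fun z hz => hminnorm z hz⟩
  rw [NormedAddCommGroup.tendsto_atTop]
  intro ε hε
  have hε5 : 0 < ε / 5 := by linarith
  obtain ⟨J, z, hzmem, hzsol, hznorm, hzq⟩ := happrox (ε / 5) hε5
  obtain ⟨N, hN⟩ := NormedAddCommGroup.tendsto_atTop.mp hfexlim (ε / 5) hε5
  have hNq : ‖fex N - q‖ < ε / 5 := hN N le_rfl
  have hE1 : ∀ᶠ l in atTop, J ≤ j l := hj.eventually_ge_atTop J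
  have hE2 : ∀ᶠ l in atTop, ‖f l N - fex N‖ < ε / 5 := by
    have h' : Tendsto (fun l => ‖f l N - fex N‖) atTop (nhds 0) :=
      tendsto_iff_norm_sub_tendsto_zero.mp (hstab N)
    exact h'.eventually_lt_const hε5
  have hE3 : ∀ᶠ l in atTop, ∀ m ∈ Finset.range N,
      (wex m ≠ 0 → nstar l ≠ m) ∧ (wex m = 0 → ‖f l m - q‖ < ε / 5) := by
    rw [Filter.eventually_all_finset]
    intro m _
    rcases eq_or_ne (wex m) 0 with h0 | hne
    · have hfq : fex m = q := by
        apply hsol_unique _ (hfexK m)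
        have := hwex m
        rw [h0] at this
        exact (sub_eq_zero.mp this.symm)
      have h' : Tendsto (fun l => ‖f l m - q‖) atTop (nhds 0) := by
        have := tendsto_iff_norm_sub_tendsto_zero.mp (hstab m)
        rwa [hfq] at this
      filter_upwards [h'.eventually_lt_const hε5] with l hl
      exact ⟨fun hc => absurd h0 hc, fun _ => hl⟩
    · have h9 : Tendsto (fun l => ‖w l m‖ - τ * (ρ' * η l + δ l)) atTop
          (nhds (‖wex m‖ - 0)) := (hwtend m).norm.sub hτθlim
      have h10 : ∀ᶠ l in atTop, (0:ℝ) < ‖w l m‖ - τ * (ρ' * η l + δ l) :=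
        h9.eventually_const_lt (by simpa using norm_pos_iff.mpr hne)
      filter_upwards [h10] with l hl
      refine ⟨fun _ hcm => ?_, fun hc => absurd hc hne⟩
      have h11 := (hnstar l).1
      rw [hcm] at h11
      linarith
  obtain ⟨L, hL⟩ := Filter.eventually_atTop.mp (hE1.and (hE2.and hE3))
  refine ⟨L, fun l hl => ?_⟩
  obtain ⟨h1, h2, h3⟩ := hL l hl
  rcases lt_or_ge (nstar l) N with hlt | hgeN
  · obtain ⟨ha, hb⟩ := h3 (nstar l) (Finset.mem_range.mpr hlt)
    rcases eq_or_ne (wex (nstar l)) 0 with h0 | hne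
    · have := hb h0
      linarith
    · exact absurd rfl (ha hne)
  · have hfej := hfejer l z (hmono' h1 hzmem) hzsol hznorm N (nstar l) hgeN le_rfl
    have htr1 : ‖f l (nstar l) - q‖ ≤ ‖f l (nstar l) - z‖ + ‖z - q‖ := by
      have e : f l (nstar l) - q = (f l (nstar l) - z) + (z - q) := by abel
      rw [e]
      exact norm_add_le _ _
    have htr2 : ‖f l N - z‖ ≤ ‖f l N - fex N‖ + ‖fex N - q‖ + ‖q - z‖ := by
      have e : f l N - z = (f l N - fex N) + (fex N - q) + (q - z) := by abel
      rw [e]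
      exact le_trans (norm_add_le _ _) (add_le_add_left (norm_add_le _ _) _)
    have h12 : ‖q - z‖ = ‖z - q‖ := norm_sub_rev _ _
    linarith
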